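/- Let f : Σ → ℝ³ be a CMC-H immersion (H ≠ 0) with unit normal N, and define the parallel surface f^d = f + H⁻¹ N with normal N^d = −N. If f has first fundamental form e^{2u}(dx²+dy²), Hopf differential function Q = ⟨f_{zz}, N⟩ satisfying the normalization H = 2Q, and mean curvature H, then f^d has first fundamental form e^{−2u}(dx²+dy²), Hopf differential function Q_d = ⟨f^d_{zz}, N^d⟩ = Q, and mean curvature H_d = 2e^{2u}⟨f^d_{z z̄}, N^d⟩ = H. -/
import Mathlib


open Matrix Complex Finset

noncomputable section

/-- ℂ-bilinear extension of the Euclidean inner product on ℝ³. -/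
def B (v w : Fin 3 → ℂ) : ℂ := ∑ i, v i * w i

/-- data of the dual (parallel) CMC surface at a point.
All derivatives of `f` and `N` at the point under consideration are given as
data, subject to the Gauss–Weingarten equations for a normalized isothermic
CMC-H immersion.  The derivatives of the dual surface `f^d = f + H⁻¹ N` are
then determined by the product rule, and we conclude that `f^d` has first
fundamental form `e^{-2u}(dx²+dy²)`, Hopf differential `Q_d = Q` and mean
curvature `H_d = H` (all computed with respect to the normal `N^d = -N`). -/
theorem stmt4
    (H Q u : ℝ) (uz : ℂ)
    (fz fzz fzzb N : Fin 3 → ℂ)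
    -- N is real (a vector in ℝ³):
    (hNreal : ∀ i, (N i).im = 0)
    -- H ≠ 0 and the normalization H = 2Q:
    (hH : H ≠ 0) (hHQ : (H : ℝ) = 2 * Q)
    -- unit normal, orthogonal to the tangent space:
    (hNN : B N N = 1) (hfzN : B fz N = 0)
    -- conformal metric e^{2u}(dx²+dy²):  ⟨f_z,f_z⟩ = 0, ⟨f_z, f_z̄⟩ = e^{2u}/2,
    -- where f_z̄ = conj(f_z) since f is real valued:
    (hconf : B fz fz = 0)
    (hmetric : B fz (fun i => starRingEnd ℂ (fz i)) = Real.exp (2*u) / 2)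
    -- Gauss–Weingarten equations:
    (hGW1 : fzz = fun i => 2 * uz * fz i + (Q : ℂ) * N i)
    (hGW2 : fzzb = fun i => (H : ℂ)/2 * Real.exp (2*u) * N i)
    -- with N_z determined by the Weingarten equation:
    (Nz : Fin 3 → ℂ)
    (hGW3 : Nz = fun i => -(H : ℂ) * fz i
        - 2 * Q * Real.exp (-(2*u)) * starRingEnd ℂ (fz i))
    -- second derivatives of N, obtained by differentiating hGW3 and using
    -- f_{z̄ z} = fzzb, f_{z̄ z̄} = conj fzz, u real (so u_z̄ = conj u_z):
    (Nzz Nzzb : Fin 3 → ℂ)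
    (hNzz : Nzz = fun i => -(H : ℂ) * fzz i
        + 4 * Q * uz * Real.exp (-(2*u)) * starRingEnd ℂ (fz i)
        - 2 * Q * Real.exp (-(2*u)) * fzzb i)
    (hNzzb : Nzzb = fun i => -(H : ℂ) * fzzb i
        + 4 * Q * (starRingEnd ℂ uz) * Real.exp (-(2*u)) * starRingEnd ℂ (fz i)
        - 2 * Q * Real.exp (-(2*u)) * starRingEnd ℂ (fzz i))
    -- derivatives of the dual surface f^d = f + H⁻¹ N:
    (fdz fdzz fdzzb : Fin 3 → ℂ)
    (hfdz : fdz = fun i => fz i + (H : ℂ)⁻¹ * Nz i)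
    (hfdzz : fdzz = fun i => fzz i + (H : ℂ)⁻¹ * Nzz i)
    (hfdzzb : fdzzb = fun i => fzzb i + (H : ℂ)⁻¹ * Nzzb i) :
    -- f^d is conformal with first fundamental form e^{-2u}(dx²+dy²):
    B fdz fdz = 0 ∧
    B fdz (fun i => starRingEnd ℂ (fdz i)) = Real.exp (-(2*u)) / 2 ∧
    -- Hopf differential Q_d = ⟨f^d_{zz}, N^d⟩ = Q, with N^d = -N:
    B fdzz (fun i => -N i) = (Q : ℂ) ∧
    -- mean curvature H_d = 2 e^{2u} ⟨f^d_{z z̄}, N^d⟩ = H: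
    2 * Real.exp (2*u) * B fdzzb (fun i => -N i) = (H : ℂ) := by
  subst hHQ
  have hQ : (Q : ℂ) ≠ 0 := by
    intro h
    apply hH
    have : Q = 0 := by exact_mod_cast h
    simp [this]
  have hE : ((Real.exp (2*u) : ℝ) : ℂ) ≠ 0 := by
    exact_mod_cast Real.exp_ne_zero _
  have hEinv : ((Real.exp (2*u) : ℝ) : ℂ) * ((Real.exp (2*u) : ℝ) : ℂ)⁻¹ = 1 :=
    mul_inv_cancel₀ hE
  have hEneg : ((Real.exp (-(2*u)) : ℝ) : ℂ) = ((Real.exp (2*u) : ℝ) : ℂ)⁻¹ := by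
    rw [Real.exp_neg]; push_cast; ring
  have hNc : ∀ i, starRingEnd ℂ (N i) = N i := fun i =>
    Complex.conj_eq_iff_im.2 (hNreal i)
  -- closed form of fdz
  have h1 : fdz = fun i => -((Real.exp (2*u) : ℝ) : ℂ)⁻¹ * starRingEnd ℂ (fz i) := by
    rw [hfdz, hGW3]
    funext i
    rw [hEneg]
    push_cast
    field_simp
    ring
  -- closed form of fdzz
  have h2 : fdzz = fun i => 2 * uz * ((Real.exp (2*u) : ℝ) : ℂ)⁻¹ * starRingEnd ℂ (fz i)
      + (-(Q:ℂ)) * N i := by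
    rw [hfdzz, hNzz, hGW1, hGW2]
    funext i
    rw [hEneg]
    push_cast
    field_simp
    ring
  -- closed form of fdzzb
  have h3 : fdzzb = fun i => -(Q:ℂ) * ((Real.exp (2*u) : ℝ) : ℂ)⁻¹ * N i := by
    rw [hfdzzb, hNzzb, hGW1, hGW2]
    funext i
    rw [hEneg]
    simp only [map_add, _root_.map_mul, map_ofNat, Complex.conj_ofReal, hNc]
    push_cast
    field_simp
    ring
  -- expand all scalar hypotheses
  simp only [B, Fin.sum_univ_three] at hNN hfzN hconf hmetric
  have hconfc := congrArg (starRingEnd ℂ) hconf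
  simp only [map_add, _root_.map_mul, map_zero] at hconfc
  have hfzNc := congrArg (starRingEnd ℂ) hfzN
  simp only [map_add, _root_.map_mul, map_zero, hNc] at hfzNc
  have hmetricc := congrArg (starRingEnd ℂ) hmetric
  simp only [map_add, _root_.map_mul, map_div₀, Complex.conj_conj, Complex.conj_ofReal,
    map_ofNat] at hmetricc
  refine ⟨?_, ?_, ?_, ?_⟩
  · simp only [h1, B, Fin.sum_univ_three]
    linear_combination (((Real.exp (2*u) : ℝ) : ℂ)⁻¹ * ((Real.exp (2*u) : ℝ) : ℂ)⁻¹) * hconfc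
  · simp only [h1, B, Fin.sum_univ_three, _root_.map_mul, map_neg, map_inv₀,
      Complex.conj_ofReal, Complex.conj_conj]
    rw [hEneg]
    linear_combination (((Real.exp (2*u) : ℝ) : ℂ)⁻¹ * ((Real.exp (2*u) : ℝ) : ℂ)⁻¹) * hmetricc
      + (((Real.exp (2*u) : ℝ) : ℂ)⁻¹ / 2) * hEinv
  · simp only [h2, B, Fin.sum_univ_three]
    linear_combination (-2 * uz * ((Real.exp (2*u) : ℝ) : ℂ)⁻¹) * hfzNc + (Q : ℂ) * hNN
  · simp only [h3, B, Fin.sum_univ_three]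
    push_cast [← Complex.ofReal_exp]
    linear_combination (2 * Q * ((Real.exp (2*u) : ℝ) : ℂ) * ((Real.exp (2*u) : ℝ) : ℂ)⁻¹) * hNN
      + (2 * (Q:ℂ)) * hEinv
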